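/- If two points y, z on a circle of radius 2/√3 centered at x both lie in the closed half-plane {w : ⟨w − x, u⟩ ≥ 1} for some unit vector u (i.e., beyond a line tangent to the unit circle centered at x), then the angle ∠yxz is at most 2 arccos(√3 − 1). -/

import Mathlib

open EuclideanGeometry

lemma arccos_antitone : Antitone Real.arccos := by
  intro a b hab
  simp only [Real.arccos_eq_pi_div_two_sub_arcsin]
  linarith [Real.monotone_arcsin hab]

set_option maxHeartbeats 1000000 in
/-- If two points `y, z` on the circle of radius `2/√3` centered at `x` both lie in the
closed half-plane `{w : ⟪w - x, u⟫ ≥ 1}` beyond a line tangent to the unit circle centered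
at `x`, then the angle `∠ y x z` is at most `2 arccos (√3 - 1)`. -/
theorem angle_bound_halfplane (x y z u : EuclideanSpace ℝ (Fin 2)) (hu : ‖u‖ = 1)
    (hy : ‖y - x‖ = 2 / Real.sqrt 3) (hz : ‖z - x‖ = 2 / Real.sqrt 3)
    (hyu : 1 ≤ (inner ℝ (y - x) u : ℝ)) (hzu : 1 ≤ (inner ℝ (z - x) u : ℝ)) :
    ∠ y x z ≤ 2 * Real.arccos (Real.sqrt 3 - 1) := by
  have h3 : (0:ℝ) < Real.sqrt 3 := Real.sqrt_pos.2 (by norm_num)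
  have h3sq : Real.sqrt 3 ^ 2 = 3 := Real.sq_sqrt (by norm_num)
  set a := y - x
  set b := z - x
  set r : ℝ := 2 / Real.sqrt 3 with hr
  have hrsq : r ^ 2 = 4 / 3 := by
    rw [hr, div_pow, h3sq]; norm_num
  set s : ℝ := inner ℝ a u
  set t : ℝ := inner ℝ b u
  -- components orthogonal to u
  set a' := a - s • u
  set b' := b - t • u
  have hinner_u : (inner ℝ u u : ℝ) = 1 := by
    rw [real_inner_self_eq_norm_sq, hu]; norm_num
  have hsu : ‖s • u‖ ^ 2 = s ^ 2 := by
    rw [norm_smul, hu, Real.norm_eq_abs]; simp [sq_abs]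
  have htu : ‖t • u‖ ^ 2 = t ^ 2 := by
    rw [norm_smul, hu, Real.norm_eq_abs]; simp [sq_abs]
  have ha'sq : ‖a'‖ ^ 2 = r ^ 2 - s ^ 2 := by
    rw [show a' = a - s • u from rfl, norm_sub_sq_real, hsu, real_inner_smul_right,
      hy]
    have : (inner ℝ a u : ℝ) = s := rfl
    rw [this]; ring
  have hb'sq : ‖b'‖ ^ 2 = r ^ 2 - t ^ 2 := by
    rw [show b' = b - t • u from rfl, norm_sub_sq_real, htu, real_inner_smul_right,
      hz]
    have : (inner ℝ b u : ℝ) = t := rfl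
    rw [this]; ring
  have hs1 : 1 ≤ s := hyu
  have ht1 : 1 ≤ t := hzu
  have ha'le : ‖a'‖ ^ 2 ≤ 1 / 3 := by rw [ha'sq, hrsq]; nlinarith
  have hb'le : ‖b'‖ ^ 2 ≤ 1 / 3 := by rw [hb'sq, hrsq]; nlinarith
  have hab' : (inner ℝ a' b' : ℝ) = inner ℝ a b - s * t := by
    rw [show a' = a - s • u from rfl, show b' = b - t • u from rfl]
    simp only [inner_sub_left, inner_sub_right, real_inner_smul_left,
      real_inner_smul_right, hinner_u, real_inner_comm b u, real_inner_comm a u]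
    have h1 : (inner ℝ a u : ℝ) = s := rfl
    have h2 : (inner ℝ b u : ℝ) = t := rfl
    rw [h1, h2]; ring
  have hcs : |(inner ℝ a' b' : ℝ)| ≤ ‖a'‖ * ‖b'‖ := abs_real_inner_le_norm a' b'
  have hprod : ‖a'‖ * ‖b'‖ ≤ 1 / 3 := by
    nlinarith [norm_nonneg a', norm_nonneg b']
  have hst : (1:ℝ) ≤ s * t := by nlinarith
  have hab : (2:ℝ) / 3 ≤ inner ℝ a b := by
    linarith [(abs_le.1 hcs).1, hab', hprod, hst]
  -- angle bound: cos of the angle is at least 1/2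
  have hangle : ∠ y x z = Real.arccos ((inner ℝ a b : ℝ) / (‖a‖ * ‖b‖)) := by
    rw [EuclideanGeometry.angle, vsub_eq_sub, vsub_eq_sub, InnerProductGeometry.angle]
  rw [hangle]
  have hhalf : (1:ℝ)/2 ≤ (inner ℝ a b : ℝ) / (‖a‖ * ‖b‖) := by
    rw [hy, hz]
    have hr0 : (0:ℝ) < r := by rw [hr]; positivity
    rw [le_div_iff₀ (by positivity)]
    have hrr : r * r = 4 / 3 := by rw [← sq]; exact hrsq
    linarith
  have step1 : Real.arccos ((inner ℝ a b : ℝ) / (‖a‖ * ‖b‖)) ≤ Real.arccos (1/2) :=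
    arccos_antitone hhalf
  have step2 : Real.arccos (1/2 : ℝ) = Real.pi / 3 := by
    rw [← Real.cos_pi_div_three]
    exact Real.arccos_cos (by linarith [Real.pi_pos]) (by linarith [Real.pi_pos])
  have step3 : Real.pi / 6 ≤ Real.arccos (Real.sqrt 3 - 1) := by
    rw [← Real.arccos_cos (x := Real.pi / 6) (by linarith [Real.pi_pos])
      (by linarith [Real.pi_pos]), Real.cos_pi_div_six]
    apply arccos_antitone
    nlinarith
  linarith
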